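/- Let ε > 0, let n be an integer, let C, C₁ be real constants, and let J ⊆ ℝ be an open interval with x + εn > 0 for all x ∈ J. Let t, t₁, t₂ : J → ℝ be differentiable functions such that for all x ∈ J: t'(x) > 0, ε(t₁(x) − t(x)) + C > 0, ε(t₂(x) − t₁(x)) + C₁ > 0, and the chain equations t₁'(x) = (√(t'(x)) + α(x))² and t₂'(x) = (√(t₁'(x)) + β(x))² hold, where α(x) = √( (ε(t₁(x) − t(x)) + C) / ((x + εn)(x + ε(n+1))) ) and β(x) = √( (ε(t₂(x) − t₁(x)) + C₁) / ((x + ε(n+1))(x + ε(n+2))) ). Then the function F(x) = (x + εn)·α(x) − (x + ε(n+2))·β(x) has zero derivative at every point of J. In other words, F = (x + εn)α − (x + ε(n+2))Dα is an x-integral of the chain t_{1x} = (√(t_x) + α)². -/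

import Mathlib

/-- `F = (x+εn)α - (x+ε(n+2))Dα` is an x-integral of the chain
`t_{1x} = (√t_x + α)²`. -/
theorem stmt_13 (ε : ℝ) (hε : 0 < ε) (n : ℤ) (C C₁ : ℝ) (J : Set ℝ)
    (hJ : IsOpen J) (hJc : J.OrdConnected)
    (hJpos : ∀ x ∈ J, 0 < x + ε * (n : ℝ))
    (t t₁ t₂ : ℝ → ℝ)
    (ht : ∀ x ∈ J, DifferentiableAt ℝ t x)
    (ht₁ : ∀ x ∈ J, DifferentiableAt ℝ t₁ x)
    (ht₂ : ∀ x ∈ J, DifferentiableAt ℝ t₂ x)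
    (htpos : ∀ x ∈ J, 0 < deriv t x)
    (hCpos : ∀ x ∈ J, 0 < ε * (t₁ x - t x) + C)
    (hC₁pos : ∀ x ∈ J, 0 < ε * (t₂ x - t₁ x) + C₁)
    (α β : ℝ → ℝ)
    (hα : ∀ x, α x = Real.sqrt ((ε * (t₁ x - t x) + C)
      / ((x + ε * (n : ℝ)) * (x + ε * ((n : ℝ) + 1)))))
    (hβ : ∀ x, β x = Real.sqrt ((ε * (t₂ x - t₁ x) + C₁)
      / ((x + ε * ((n : ℝ) + 1)) * (x + ε * ((n : ℝ) + 2)))))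
    (hchain1 : ∀ x ∈ J, deriv t₁ x = (Real.sqrt (deriv t x) + α x)^2)
    (hchain2 : ∀ x ∈ J, deriv t₂ x = (Real.sqrt (deriv t₁ x) + β x)^2) :
    ∀ x ∈ J, deriv (fun y =>
      (y + ε * (n : ℝ)) * α y - (y + ε * ((n : ℝ) + 2)) * β y) x = 0 := by
  intro x hx
  have ha : (0:ℝ) < x + ε * (n : ℝ) := hJpos x hx
  have hb : (0:ℝ) < x + ε * ((n : ℝ) + 1) := by nlinarith
  have hc : (0:ℝ) < x + ε * ((n : ℝ) + 2) := by nlinarith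
  have hP : 0 < ε * (t₁ x - t x) + C := hCpos x hx
  have hQ : 0 < ε * (t₂ x - t₁ x) + C₁ := hC₁pos x hx
  have hdt : 0 < deriv t x := htpos x hx
  have hab : 0 < (x + ε * (n : ℝ)) * (x + ε * ((n : ℝ) + 1)) := mul_pos ha hb
  have hbc : 0 < (x + ε * ((n : ℝ) + 1)) * (x + ε * ((n : ℝ) + 2)) := mul_pos hb hc
  have hαpos : 0 < α x := by rw [hα]; exact Real.sqrt_pos.mpr (div_pos hP hab)
  have hβpos : 0 < β x := by rw [hβ]; exact Real.sqrt_pos.mpr (div_pos hQ hbc)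
  -- derivative of the inside of α
  have hu1 : HasDerivAt (fun y => ε * (t₁ y - t y) + C)
      (ε * (deriv t₁ x - deriv t x)) x :=
    (HasDerivAt.const_mul ε ((ht₁ x hx).hasDerivAt.sub (ht x hx).hasDerivAt)).add_const C
  have hv1 : HasDerivAt (fun y => (y + ε * (n : ℝ)) * (y + ε * ((n : ℝ) + 1)))
      (1 * (x + ε * ((n : ℝ) + 1)) + (x + ε * (n : ℝ)) * 1) x :=
    ((hasDerivAt_id x).add_const _).mul ((hasDerivAt_id x).add_const _)
  have hf1 := hu1.div hv1 hab.ne'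
  have hα' := hf1.sqrt (div_pos hP hab).ne'
  have hαd : HasDerivAt α
      ((ε * (deriv t₁ x - deriv t x) * ((x + ε * (n : ℝ)) * (x + ε * ((n : ℝ) + 1)))
        - (ε * (t₁ x - t x) + C) * (1 * (x + ε * ((n : ℝ) + 1)) + (x + ε * (n : ℝ)) * 1))
        / ((x + ε * (n : ℝ)) * (x + ε * ((n : ℝ) + 1))) ^ 2
        / (2 * Real.sqrt ((ε * (t₁ x - t x) + C)
            / ((x + ε * (n : ℝ)) * (x + ε * ((n : ℝ) + 1)))))) x := by
    have hfun : α = fun y => Real.sqrt ((ε * (t₁ y - t y) + C)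
        / ((y + ε * (n : ℝ)) * (y + ε * ((n : ℝ) + 1)))) := funext hα
    rw [hfun]; exact hα'
  -- derivative of the inside of β
  have hu2 : HasDerivAt (fun y => ε * (t₂ y - t₁ y) + C₁)
      (ε * (deriv t₂ x - deriv t₁ x)) x :=
    (HasDerivAt.const_mul ε ((ht₂ x hx).hasDerivAt.sub (ht₁ x hx).hasDerivAt)).add_const C₁
  have hv2 : HasDerivAt (fun y => (y + ε * ((n : ℝ) + 1)) * (y + ε * ((n : ℝ) + 2)))
      (1 * (x + ε * ((n : ℝ) + 2)) + (x + ε * ((n : ℝ) + 1)) * 1) x :=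
    ((hasDerivAt_id x).add_const _).mul ((hasDerivAt_id x).add_const _)
  have hf2 := hu2.div hv2 hbc.ne'
  have hβ' := hf2.sqrt (div_pos hQ hbc).ne'
  have hβd : HasDerivAt β
      ((ε * (deriv t₂ x - deriv t₁ x) * ((x + ε * ((n : ℝ) + 1)) * (x + ε * ((n : ℝ) + 2)))
        - (ε * (t₂ x - t₁ x) + C₁) * (1 * (x + ε * ((n : ℝ) + 2)) + (x + ε * ((n : ℝ) + 1)) * 1))
        / ((x + ε * ((n : ℝ) + 1)) * (x + ε * ((n : ℝ) + 2))) ^ 2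
        / (2 * Real.sqrt ((ε * (t₂ x - t₁ x) + C₁)
            / ((x + ε * ((n : ℝ) + 1)) * (x + ε * ((n : ℝ) + 2)))))) x := by
    have hfun : β = fun y => Real.sqrt ((ε * (t₂ y - t₁ y) + C₁)
        / ((y + ε * ((n : ℝ) + 1)) * (y + ε * ((n : ℝ) + 2)))) := funext hβ
    rw [hfun]; exact hβ'
  have hg := (((hasDerivAt_id x).add_const (ε * (n : ℝ))).mul hαd)
  have hh := (((hasDerivAt_id x).add_const (ε * ((n : ℝ) + 2))).mul hβd)
  have hF := hg.sub hh
  simp only [id_eq] at hF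
  show deriv ((fun x => x + ε * (n : ℝ)) * α - (fun x => x + ε * ((n : ℝ) + 2)) * β) x = 0
  rw [hF.deriv]
  rw [← hα x, ← hβ x]
  set S := Real.sqrt (deriv t x) with hSdef
  have hSnn : 0 ≤ S := Real.sqrt_nonneg _
  have e1 : deriv t₁ x = (S + α x) ^ 2 := hchain1 x hx
  have e3 : Real.sqrt (deriv t₁ x) = S + α x := by
    rw [e1, Real.sqrt_sq (by positivity)]
  have e2 : deriv t₂ x = (S + α x + β x) ^ 2 := by
    rw [hchain2 x hx, e3]
  have e0 : deriv t x = S ^ 2 := (Real.sq_sqrt hdt.le).symm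
  have eP : ε * (t₁ x - t x) + C = (α x) ^ 2 * ((x + ε * (n : ℝ)) * (x + ε * ((n : ℝ) + 1))) := by
    rw [hα, Real.sq_sqrt (div_pos hP hab).le]
    field_simp
  have eQ : ε * (t₂ x - t₁ x) + C₁
      = (β x) ^ 2 * ((x + ε * ((n : ℝ) + 1)) * (x + ε * ((n : ℝ) + 2))) := by
    rw [hβ, Real.sq_sqrt (div_pos hQ hbc).le]
    field_simp
  rw [e2, e1, e0, eP, eQ]
  field_simp
  ring
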